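/- Let λ > 0, μ ≥ 0 be real and v ∈ ℝ with v ≠ 0 and v ≠ u. Then for u ∈ (0,1), ∫_{-∞}^{∞} log|(λ/2 + μ) + iλt| e^{-ut² + it(u-v)} dt = O(1/(u-v)²), where the implied constant depends only on λ and μ. -/

import Mathlib

open MeasureTheory Real Filter Set
open scoped FourierTransform

namespace Stmt12Aux

noncomputable def P (a lam t : ℝ) : ℝ := a^2 + lam^2 * t^2
noncomputable def L (a lam t : ℝ) : ℝ := Real.log (P a lam t) / 2
noncomputable def L1 (a lam t : ℝ) : ℝ := lam^2 * t / P a lam t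
noncomputable def L2 (a lam t : ℝ) : ℝ :=
  lam^2 * (a^2 - lam^2 * t^2) / (P a lam t)^2
noncomputable def g (u t : ℝ) : ℝ := Real.exp (-u * t^2)
noncomputable def F0 (a lam u t : ℝ) : ℝ := L a lam t * g u t
noncomputable def F1 (a lam u t : ℝ) : ℝ :=
  L1 a lam t * g u t + L a lam t * (-2*u*t * g u t)
noncomputable def F2 (a lam u t : ℝ) : ℝ :=
  L2 a lam t * g u t + 2 * (L1 a lam t * (-2*u*t * g u t))
    + L a lam t * ((4*u^2*t^2 - 2*u) * g u t)

variable {a u : ℝ}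

lemma hP (ha : 0 < a) (lam t : ℝ) : 0 < P a lam t :=
  lt_of_lt_of_le (pow_pos ha 2) (le_add_of_nonneg_right (by positivity))

lemma hasDerivAt_P (a lam t : ℝ) : HasDerivAt (fun t => P a lam t) (2*lam^2*t) t := by
  have h : HasDerivAt (fun t : ℝ => lam^2 * t^2) (lam^2 * (2*t^1)) t :=
    (hasDerivAt_pow 2 t).const_mul (lam^2)
  have h2 := h.const_add (a^2)
  refine h2.congr_deriv ?_
  ring

lemma hasDerivAt_L (ha : 0 < a) (lam t : ℝ) :
    HasDerivAt (fun t => L a lam t) (L1 a lam t) t := by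
  have h := ((Real.hasDerivAt_log (hP ha lam t).ne').comp t (hasDerivAt_P a lam t)).div_const 2
  refine h.congr_deriv ?_
  unfold L1 P
  field_simp

lemma hasDerivAt_L1 (ha : 0 < a) (lam t : ℝ) :
    HasDerivAt (fun t => L1 a lam t) (L2 a lam t) t := by
  have hnum : HasDerivAt (fun t : ℝ => lam^2 * t) (lam^2) t := by
    simpa using (hasDerivAt_id t).const_mul (lam^2)
  have h := hnum.div (hasDerivAt_P a lam t) (hP ha lam t).ne'
  refine h.congr_deriv ?_
  unfold L2 P
  field_simp
  ring

lemma hasDerivAt_g (u t : ℝ) : HasDerivAt (fun t => g u t) (-2*u*t * g u t) t := by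
  have h : HasDerivAt (fun t : ℝ => -u * t^2) (-u * (2*t^1)) t :=
    (hasDerivAt_pow 2 t).const_mul (-u)
  have := h.exp
  refine this.congr_deriv ?_
  unfold g
  ring

lemma hasDerivAt_g1 (u t : ℝ) :
    HasDerivAt (fun t => -2*u*t * g u t) ((4*u^2*t^2 - 2*u) * g u t) t := by
  have hlin : HasDerivAt (fun t : ℝ => -2*u*t) (-2*u) t := by
    simpa using (hasDerivAt_id t).const_mul (-2*u)
  have := hlin.mul (hasDerivAt_g u t)
  refine this.congr_deriv ?_
  ring

lemma hasDerivAt_F0 (ha : 0 < a) (lam u t : ℝ) :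
    HasDerivAt (fun t => F0 a lam u t) (F1 a lam u t) t :=
  (hasDerivAt_L ha lam t).mul (hasDerivAt_g u t)

lemma hasDerivAt_F1 (ha : 0 < a) (lam u t : ℝ) :
    HasDerivAt (fun t => F1 a lam u t) (F2 a lam u t) t := by
  have h := ((hasDerivAt_L1 ha lam t).mul (hasDerivAt_g u t)).add
    ((hasDerivAt_L ha lam t).mul (hasDerivAt_g1 u t))
  refine h.congr_deriv ?_
  unfold F2
  ring

-- pointwise bounds

lemma L_bound {a lam : ℝ} (ha : 0 < a) (hlam : 0 < lam) (t : ℝ) :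
    |L a lam t| ≤ |Real.log a| + lam/a * |t| := by
  unfold L P
  have hPt : 0 < a^2 + lam^2*t^2 := by positivity
  have hup : a^2 + lam^2*t^2 ≤ (a + lam*|t|)^2 := by
    nlinarith [abs_nonneg t, sq_abs t, ha.le, hlam.le, mul_nonneg hlam.le (abs_nonneg t)]
  have e1 : Real.log (a^2) ≤ Real.log (a^2 + lam^2*t^2) :=
    Real.log_le_log (by positivity) (by nlinarith [sq_nonneg (lam*t), sq_abs t])
  have e2 : Real.log (a^2 + lam^2*t^2) ≤ Real.log ((a + lam*|t|)^2) :=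
    Real.log_le_log hPt hup
  rw [Real.log_pow] at e1 e2
  push_cast at e1 e2
  have hx : 0 ≤ lam * |t| := mul_nonneg hlam.le (abs_nonneg t)
  have hx2 : 0 ≤ lam / a * |t| := mul_nonneg (div_nonneg hlam.le ha.le) (abs_nonneg t)
  have h4 : lam * |t| / a = lam / a * |t| := by ring
  have hub : Real.log (a + lam*|t|) ≤ Real.log a + lam * |t| / a := by
    have h3 : Real.log ((a + lam*|t|)/a) ≤ (a + lam*|t|)/a - 1 :=
      Real.log_le_sub_one_of_pos (by positivity)
    rw [Real.log_div (by positivity) ha.ne'] at h3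
    have : (a + lam*|t|)/a - 1 = lam*|t|/a := by field_simp; ring
    linarith [this ▸ h3]
  rw [abs_le]
  constructor
  · have := neg_abs_le (Real.log a)
    linarith
  · have := le_abs_self (Real.log a)
    linarith

lemma L1_bound {a lam : ℝ} (ha : 0 < a) (hlam : 0 < lam) (t : ℝ) :
    |L1 a lam t| ≤ lam/(2*a) := by
  unfold L1 P
  have hPt : 0 < a^2 + lam^2*t^2 := by positivity
  rw [abs_div, abs_of_pos hPt, div_le_div_iff₀ hPt (by positivity)]
  have : |lam^2 * t| = lam^2 * |t| := by
    rw [abs_mul, abs_of_pos (by positivity : (0:ℝ) < lam^2)]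
  rw [this]
  have e : lam * (a - lam*|t|)^2 = lam*a^2 - 2*a*lam^2*|t| + lam^3*t^2 := by
    have h5 : lam * (a - lam*|t|)^2 = lam*a^2 - 2*a*lam^2*|t| + lam^3*|t|^2 := by ring
    rw [h5, sq_abs]
  have e2 : (0:ℝ) ≤ lam*a^2 - 2*a*lam^2*|t| + lam^3*t^2 :=
    e ▸ (mul_nonneg hlam.le (sq_nonneg (a - lam*|t|)))
  nlinarith [e2]

lemma L2_bound {a lam : ℝ} (ha : 0 < a) (hlam : 0 < lam) (t : ℝ) :
    |L2 a lam t| ≤ lam^2 / P a lam t := by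
  unfold L2 P
  have hPt : 0 < a^2 + lam^2*t^2 := by positivity
  rw [abs_div, abs_of_pos (by positivity : (0:ℝ) < (a^2+lam^2*t^2)^2)]
  rw [div_le_div_iff₀ (by positivity) hPt]
  have h1 : |lam^2 * (a^2 - lam^2*t^2)| ≤ lam^2 * (a^2 + lam^2*t^2) := by
    rw [abs_mul, abs_of_pos (by positivity : (0:ℝ) < lam^2)]
    have h2 : |a^2 - lam^2*t^2| ≤ a^2 + lam^2*t^2 := by
      calc |a^2 - lam^2*t^2| ≤ |a^2| + |lam^2*t^2| := abs_sub _ _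
        _ = a^2 + lam^2*t^2 := by
          rw [abs_of_nonneg (sq_nonneg a), abs_of_nonneg (by positivity : (0:ℝ) ≤ lam^2*t^2)]
    exact mul_le_mul_of_nonneg_left h2 (by positivity)
  nlinarith [mul_nonneg (sub_nonneg.2 h1) hPt.le]

lemma g_pos (u t : ℝ) : 0 < g u t := Real.exp_pos _

lemma g_le_one (hu : 0 < u) (t : ℝ) : g u t ≤ 1 :=
  Real.exp_le_one_iff.mpr (by nlinarith [sq_nonneg t])

-- moments

lemma integrable_abs_pow_gauss {b : ℝ} (hb : 0 < b) (k : ℕ) :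
    Integrable (fun t : ℝ => |t| ^ k * Real.exp (-b * t^2)) := by
  have h := integrable_rpow_mul_exp_neg_mul_sq hb
    (s := (k:ℝ)) (lt_of_lt_of_le neg_one_lt_zero (Nat.cast_nonneg k))
  refine h.abs.congr (Eventually.of_forall fun x => ?_)
  simp [Real.rpow_natCast, abs_mul, abs_pow, abs_of_pos (Real.exp_pos (-b * x^2))]

lemma integrable_sq_gauss {b : ℝ} (hb : 0 < b) :
    Integrable (fun t : ℝ => t ^ 2 * Real.exp (-b * t^2)) := by
  refine (integrable_abs_pow_gauss hb 2).congr (Eventually.of_forall fun x => ?_)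
  simp [sq_abs]

lemma integral_abs_pow_gauss {b : ℝ} (hb : 0 < b) (k : ℕ) :
    ∫ t : ℝ, |t| ^ k * Real.exp (-b * t^2)
      = b ^ (-((k:ℝ)+1)/2) * Real.Gamma (((k:ℝ)+1)/2) := by
  have habs := integral_comp_abs (f := fun x : ℝ => x ^ k * Real.exp (-b * x^2))
  have step1 : ∫ t : ℝ, |t| ^ k * Real.exp (-b * t^2)
      = ∫ x : ℝ, |x| ^ k * Real.exp (-b * |x|^2) := by
    congr 1; funext t; rw [sq_abs]
  rw [step1, habs]
  have step2 : ∫ x in Ioi (0:ℝ), x ^ k * Real.exp (-b * x^2)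
      = ∫ x in Ioi (0:ℝ), x ^ ((k:ℝ)) * Real.exp (-b * x ^ (2:ℝ)) := by
    refine setIntegral_congr_fun measurableSet_Ioi (fun x hx => ?_)
    rw [Real.rpow_natCast, show (2:ℝ) = ((2:ℕ):ℝ) by norm_num, Real.rpow_natCast]
  rw [step2, integral_rpow_mul_exp_neg_mul_rpow two_pos
    (lt_of_lt_of_le neg_one_lt_zero (Nat.cast_nonneg k)) hb]
  ring

lemma M1 {b : ℝ} (hb : 0 < b) : ∫ t : ℝ, |t| * Real.exp (-b * t^2) = b⁻¹ := by
  have h := integral_abs_pow_gauss hb 1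
  simp only [pow_one, Nat.cast_one] at h
  rw [h, show (-((1:ℝ)+1)/2 : ℝ) = -1 by norm_num, show ((1:ℝ)+1)/2 = 1 by norm_num,
    Real.Gamma_one, Real.rpow_neg_one, mul_one]

lemma M2 {b : ℝ} (hb : 0 < b) :
    ∫ t : ℝ, t^2 * Real.exp (-b * t^2) = b ^ (-(3:ℝ)/2) * (Real.sqrt π / 2) := by
  have h := integral_abs_pow_gauss hb 2
  simp only [sq_abs, Nat.cast_ofNat] at h
  rw [h, show (-((2:ℝ)+1)/2 : ℝ) = -(3:ℝ)/2 by norm_num, show ((2:ℝ)+1)/2 = 1/2 + 1 by norm_num,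
    Real.Gamma_add_one (by norm_num), Real.Gamma_one_half_eq]
  ring

lemma M3 {b : ℝ} (hb : 0 < b) : ∫ t : ℝ, |t|^3 * Real.exp (-b * t^2) = (b^2)⁻¹ := by
  have h := integral_abs_pow_gauss hb 3
  simp only [Nat.cast_ofNat] at h
  have hexp : b ^ (-((3:ℝ)+1)/2) = (b^2)⁻¹ := by
    rw [show (-((3:ℝ)+1)/2) = ((-2 : ℤ) : ℝ) by norm_num, Real.rpow_intCast]
    simp [zpow_neg]
  rw [h, show ((3:ℝ)+1)/2 = 1 + 1 by norm_num,
    Real.Gamma_add_one (by norm_num), Real.Gamma_one, hexp]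
  norm_num

lemma integrable_B1 {a lam : ℝ} (ha : 0 < a) (hlam : 0 < lam) :
    Integrable (fun t : ℝ => lam^2 / (a^2 + lam^2*t^2)) := by
  have h := (integrable_inv_one_add_sq.comp_mul_left'
    (show lam/a ≠ 0 by positivity)).const_mul ((lam/a)^2)
  refine h.congr (Eventually.of_forall fun t => ?_)
  field_simp

-- continuity of F2

lemma cont_F2 {a lam u : ℝ} (ha : 0 < a) : Continuous (fun t => F2 a lam u t) := by
  have hPc : Continuous (fun t => P a lam t) := by unfold P; fun_prop
  have hPne : ∀ t, P a lam t ≠ 0 := fun t => (hP ha lam t).ne'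
  have hLc : Continuous (fun t => L a lam t) := by
    unfold L
    exact (hPc.log hPne).div_const 2
  have hL1c : Continuous (fun t => L1 a lam t) := by
    unfold L1
    exact (continuous_const.mul continuous_id).div hPc hPne
  have hL2c : Continuous (fun t => L2 a lam t) := by
    unfold L2
    exact (by fun_prop : Continuous fun t : ℝ => lam^2 * (a^2 - lam^2*t^2)).div
      (hPc.pow 2) (fun t => pow_ne_zero 2 (hPne t))
  have hgc : Continuous (fun t => g u t) := by unfold g; fun_prop
  unfold F2
  exact ((hL2c.mul hgc).add ((continuous_const.mul (hL1c.mul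
    ((by fun_prop : Continuous fun t : ℝ => -2*u*t).mul hgc))))).add
    (hLc.mul ((by fun_prop : Continuous fun t : ℝ => 4*u^2*t^2 - 2*u).mul hgc))

-- F-bounds

lemma F0_bound {a lam u : ℝ} (ha : 0 < a) (hlam : 0 < lam) (hu : 0 < u) (t : ℝ) :
    |F0 a lam u t| ≤ |Real.log a| * g u t + lam/a * (|t| * g u t) := by
  unfold F0
  rw [abs_mul, abs_of_pos (g_pos u t)]
  calc |L a lam t| * g u t ≤ (|Real.log a| + lam/a * |t|) * g u t :=
        mul_le_mul_of_nonneg_right (L_bound ha hlam t) (g_pos u t).le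
    _ = |Real.log a| * g u t + lam/a * (|t| * g u t) := by ring

lemma F1_bound {a lam u : ℝ} (ha : 0 < a) (hlam : 0 < lam) (hu : 0 < u) (hu1 : u ≤ 1) (t : ℝ) :
    |F1 a lam u t| ≤ lam/(2*a) * g u t + 2*|Real.log a| * (|t| * g u t)
      + 2*(lam/a) * (t^2 * g u t) := by
  unfold F1
  have hg := g_pos u t
  have h1 : |L1 a lam t * g u t| ≤ lam/(2*a) * g u t := by
    rw [abs_mul, abs_of_pos hg]
    exact mul_le_mul_of_nonneg_right (L1_bound ha hlam t) hg.le
  have h2 : |L a lam t * (-2*u*t * g u t)| ≤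
      2*|Real.log a| * (|t| * g u t) + 2*(lam/a) * (t^2 * g u t) := by
    rw [abs_mul]
    have e2 : |(-2)*u| = 2*u := by
      rw [abs_mul, abs_of_pos hu]
      norm_num
    have e : |(-2*u*t * g u t)| = 2*u*|t| * g u t := by
      rw [show (-2*u*t * g u t) = ((-2)*u)*t*g u t by ring, abs_mul, abs_mul, e2,
        abs_of_pos hg]
    rw [e]
    calc |L a lam t| * (2*u*|t| * g u t)
        ≤ (|Real.log a| + lam/a * |t|) * (2*u*|t| * g u t) := by
          apply mul_le_mul_of_nonneg_right (L_bound ha hlam t)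
          positivity
      _ = 2*u*(|Real.log a| * (|t| * g u t)) + 2*u*((lam/a) * (|t|^2 * g u t)) := by ring
      _ ≤ 2*(|Real.log a| * (|t| * g u t)) + 2*((lam/a) * (|t|^2 * g u t)) := by
          have b1 : 0 ≤ |Real.log a| * (|t| * g u t) := by positivity
          have b2 : 0 ≤ (lam/a) * (|t|^2 * g u t) := by positivity
          nlinarith
      _ = 2*|Real.log a| * (|t| * g u t) + 2*(lam/a) * (t^2 * g u t) := by
          rw [sq_abs]; ring
  calc |L1 a lam t * g u t + L a lam t * (-2*u*t * g u t)|
      ≤ |L1 a lam t * g u t| + |L a lam t * (-2*u*t * g u t)| := abs_add_le _ _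
    _ ≤ _ := by linarith

lemma F2_bound {a lam u : ℝ} (ha : 0 < a) (hlam : 0 < lam) (hu : 0 < u) (t : ℝ) :
    |F2 a lam u t| ≤ lam^2/(a^2 + lam^2*t^2)
      + (2*lam/a*u) * (|t| * g u t)
      + (|Real.log a| * (4*u^2)) * (t^2 * g u t)
      + (|Real.log a| * (2*u)) * g u t
      + (lam/a*(4*u^2)) * (|t|^3 * g u t)
      + (lam/a*(2*u)) * (|t| * g u t) := by
  have hg := g_pos u t
  have hg1 := g_le_one hu t
  have hPt : 0 < a^2 + lam^2*t^2 := by positivity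
  have hA : |L2 a lam t * g u t| ≤ lam^2/(a^2 + lam^2*t^2) := by
    rw [abs_mul, abs_of_pos hg]
    have : |L2 a lam t| * g u t ≤ (lam^2 / P a lam t) * 1 :=
      mul_le_mul (L2_bound ha hlam t) hg1 hg.le (by positivity)
    simpa [P, mul_one] using this
  have hB : |2 * (L1 a lam t * (-2*u*t * g u t))| ≤ (2*lam/a*u) * (|t| * g u t) := by
    have e : |2 * (L1 a lam t * (-2*u*t * g u t))|
        = 2 * |L1 a lam t| * (2*u*(|t| * g u t)) := by
      have e2 : |(-2)*u| = 2*u := by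
        rw [abs_mul, abs_of_pos hu]
        norm_num
      rw [show (2 * (L1 a lam t * (-2*u*t * g u t)))
          = 2 * (L1 a lam t * (((-2)*u)*t*g u t)) by ring]
      rw [abs_mul, abs_mul, abs_mul, abs_mul, e2, abs_of_pos hg,
        abs_of_nonneg (by norm_num : (0:ℝ) ≤ 2)]
      ring
    rw [e]
    calc 2 * |L1 a lam t| * (2*u*(|t| * g u t))
        ≤ 2 * (lam/(2*a)) * (2*u*(|t| * g u t)) := by
          apply mul_le_mul_of_nonneg_right _ (by positivity)
          linarith [L1_bound ha hlam t]
      _ = (2*lam/a*u) * (|t| * g u t) := by field_simp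
  have h3 : |4*u^2*t^2 - 2*u| ≤ 4*u^2*t^2 + 2*u := by
    calc |4*u^2*t^2 - 2*u| ≤ |4*u^2*t^2| + |2*u| := abs_sub _ _
      _ = 4*u^2*t^2 + 2*u := by
        rw [abs_of_nonneg (by positivity : (0:ℝ) ≤ 4*u^2*t^2),
          abs_of_nonneg (by positivity : (0:ℝ) ≤ 2*u)]
  have hC : |L a lam t * ((4*u^2*t^2 - 2*u) * g u t)|
      ≤ (|Real.log a| + lam/a * |t|) * ((4*u^2*t^2 + 2*u) * g u t) := by
    rw [abs_mul, abs_mul, abs_of_pos hg]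
    exact mul_le_mul (L_bound ha hlam t)
      (mul_le_mul_of_nonneg_right h3 hg.le) (by positivity) (by positivity)
  have ht3 : |t|^3 = |t| * t^2 := by
    rw [← sq_abs]; ring
  calc |F2 a lam u t| ≤ |L2 a lam t * g u t| + |2 * (L1 a lam t * (-2*u*t * g u t))|
        + |L a lam t * ((4*u^2*t^2 - 2*u) * g u t)| := by
        unfold F2
        exact (abs_add_le _ _).trans (add_le_add_left (abs_add_le _ _) _)
    _ ≤ lam^2/(a^2 + lam^2*t^2) + (2*lam/a*u) * (|t| * g u t)
        + (|Real.log a| + lam/a * |t|) * ((4*u^2*t^2 + 2*u) * g u t) := by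
        exact add_le_add (add_le_add hA hB) hC
    _ = _ := by rw [ht3]; ring


-- Fourier machinery

open Complex in
lemma fourier_bound {f : ℝ → ℂ} (hf : Integrable f) (h1 : Differentiable ℝ f)
    (hf' : Integrable (deriv f)) (h2 : Differentiable ℝ (deriv f))
    (hf'' : Integrable (deriv (deriv f))) (ξ : ℝ) :
    (2*π*ξ)^2 * ‖𝓕 f ξ‖ ≤ ∫ t : ℝ, ‖deriv (deriv f) t‖ := by
  have e1 := Real.fourier_deriv hf h1 hf'
  have e2 := Real.fourier_deriv hf' h2 hf''
  have key : 𝓕 (deriv (deriv f)) ξ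
      = (2*(π:ℂ)*Complex.I*(ξ:ℂ)) • ((2*(π:ℂ)*Complex.I*(ξ:ℂ)) • 𝓕 f ξ) := by
    rw [congrFun e2 ξ, congrFun e1 ξ]
  have hnc : ‖(2*(π:ℂ)*Complex.I*(ξ:ℂ))‖ = 2*π*|ξ| := by
    simp [abs_of_pos Real.pi_pos]
  have hnorm : ‖𝓕 (deriv (deriv f)) ξ‖ = (2*π*|ξ|)^2 * ‖𝓕 f ξ‖ := by
    rw [key, norm_smul, norm_smul, hnc]; ring
  have hle : ‖𝓕 (deriv (deriv f)) ξ‖ ≤ ∫ t : ℝ, ‖deriv (deriv f) t‖ :=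
    VectorFourier.norm_fourierIntegral_le_integral_norm _ _ _ _ _
  calc (2*π*ξ)^2 * ‖𝓕 f ξ‖ = (2*π*|ξ|)^2 * ‖𝓕 f ξ‖ := by
        simp [mul_pow, _root_.sq_abs]
    _ = ‖𝓕 (deriv (deriv f)) ξ‖ := hnorm.symm
    _ ≤ _ := hle

open Complex in
lemma kernel_eq (a lam u w t : ℝ) (hPnn : 0 ≤ a^2 + lam^2*t^2) :
    (Real.log ‖(a : ℂ) + Complex.I * lam * t‖ : ℂ)
        * Complex.exp (-u * t ^ 2 + Complex.I * t * (w : ℂ))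
      = Complex.exp ((-2 * π * (t * (-w/(2*π))) : ℝ) * Complex.I)
          • ((F0 a lam u t : ℝ) : ℂ) := by
  unfold F0 L g P
  have habs : ‖(a : ℂ) + Complex.I * lam * t‖ = Real.sqrt (a^2 + lam^2*t^2) := by
    rw [Complex.norm_def, Complex.normSq_apply]
    norm_num [Complex.add_re, Complex.add_im]
    ring_nf
  have hlog : Real.log (Real.sqrt (a^2 + lam^2*t^2)) = Real.log (a^2 + lam^2*t^2) / 2 :=
    Real.log_sqrt hPnn
  have harg : ((-2 * π * (t * (-w/(2*π))) : ℝ) : ℂ) * Complex.I = Complex.I * t * w := by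
    have hπ : (π : ℝ) ≠ 0 := Real.pi_ne_zero
    have : (-2 * π * (t * (-w/(2*π))) : ℝ) = t * w := by field_simp
    rw [this]; push_cast; ring
  rw [habs, hlog, harg, smul_eq_mul, Complex.exp_add]
  push_cast [Complex.ofReal_exp]
  ring

end Stmt12Aux

open Stmt12Aux Complex in
theorem stmt_12 (lam mu : ℝ) (hlam : 0 < lam) (hmu : 0 ≤ mu) :
    ∃ C : ℝ, ∀ u v : ℝ, 0 < u → u < 1 → v ≠ 0 → v ≠ u →
      ‖∫ t : ℝ, (Real.log ‖((lam / 2 + mu : ℝ) + Complex.I * lam * t : ℂ)‖ : ℂ)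
            * Complex.exp (-u * t ^ 2 + Complex.I * t * (u - v))‖
        ≤ C / (u - v) ^ 2 := by
  have ha : 0 < lam / 2 + mu := by linarith
  set a : ℝ := lam / 2 + mu with ha_def
  refine ⟨(∫ t : ℝ, lam^2/(a^2 + lam^2*t^2)) + 8*lam/a + 4*Real.sqrt π * |Real.log a|,
    fun u v hu hu1 hv0 hvu => ?_⟩
  have hw : u - v ≠ 0 := sub_ne_zero_of_ne (Ne.symm hvu)
  have hπ := Real.pi_pos
  set f : ℝ → ℂ := fun t => ((F0 a lam u t : ℝ) : ℂ) with hf_def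
  set ξ : ℝ := -(u - v)/(2*π) with hξ_def
  -- derivatives
  have hd0 : ∀ t, HasDerivAt f ((F1 a lam u t : ℝ) : ℂ) t :=
    fun t => (hasDerivAt_F0 ha lam u t).ofReal_comp
  have hdiff0 : Differentiable ℝ f := fun t => (hd0 t).differentiableAt
  have hder1 : deriv f = fun t => ((F1 a lam u t : ℝ) : ℂ) :=
    funext fun t => (hd0 t).deriv
  have hd1 : ∀ t : ℝ, HasDerivAt (fun t => ((F1 a lam u t : ℝ) : ℂ))
      ((F2 a lam u t : ℝ) : ℂ) t :=
    fun t => (hasDerivAt_F1 ha lam u t).ofReal_comp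
  have hdiff1 : Differentiable ℝ (deriv f) := by
    rw [hder1]; exact fun t => (hd1 t).differentiableAt
  have hder2 : deriv (deriv f) = fun t => ((F2 a lam u t : ℝ) : ℂ) := by
    rw [hder1]; exact funext fun t => (hd1 t).deriv
  -- basic integrable building blocks
  have iB1 : Integrable (fun t : ℝ => lam^2/(a^2+lam^2*t^2)) := integrable_B1 ha hlam
  have iX0 : Integrable (fun t : ℝ => Real.exp (-u*t^2)) := integrable_exp_neg_mul_sq hu
  have iX1 : Integrable (fun t : ℝ => |t| * Real.exp (-u*t^2)) := by
    simpa using integrable_abs_pow_gauss hu 1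
  have iX2 : Integrable (fun t : ℝ => t^2 * Real.exp (-u*t^2)) := integrable_sq_gauss hu
  have iX3 : Integrable (fun t : ℝ => |t|^3 * Real.exp (-u*t^2)) := integrable_abs_pow_gauss hu 3
  -- integrability of F0, F1, F2
  have hdF0 : Differentiable ℝ (fun t => F0 a lam u t) :=
    fun t => (hasDerivAt_F0 ha lam u t).differentiableAt
  have hdF1 : Differentiable ℝ (fun t => F1 a lam u t) :=
    fun t => (hasDerivAt_F1 ha lam u t).differentiableAt
  have hmeas0 : Continuous (fun t => F0 a lam u t) := hdF0.continuous
  have hmeas1 : Continuous (fun t => F1 a lam u t) := hdF1.continuous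
  have hIF0 : Integrable (fun t => F0 a lam u t) := by
    refine Integrable.mono' ((iX0.const_mul |Real.log a|).add (iX1.const_mul (lam/a)))
      hmeas0.aestronglyMeasurable (Eventually.of_forall fun t => ?_)
    rw [Real.norm_eq_abs]
    simpa [g] using F0_bound ha hlam hu t
  have hIF1 : Integrable (fun t => F1 a lam u t) := by
    refine Integrable.mono' (((iX0.const_mul (lam/(2*a))).add
      (iX1.const_mul (2*|Real.log a|))).add (iX2.const_mul (2*(lam/a))))
      hmeas1.aestronglyMeasurable (Eventually.of_forall fun t => ?_)
    rw [Real.norm_eq_abs]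
    simpa [g] using F1_bound ha hlam hu hu1.le t
  have j1 := iX1.const_mul (2*lam/a*u)
  have j2 := iX2.const_mul (|Real.log a| * (4*u^2))
  have j3 := iX0.const_mul (|Real.log a| * (2*u))
  have j4 := iX3.const_mul (lam/a*(4*u^2))
  have j5 := iX1.const_mul (lam/a*(2*u))
  have k2 : Integrable (fun t : ℝ => lam^2/(a^2+lam^2*t^2)
      + (2*lam/a*u) * (|t| * Real.exp (-u*t^2))) := iB1.add j1
  have k3 : Integrable (fun t : ℝ => lam^2/(a^2+lam^2*t^2)
      + (2*lam/a*u) * (|t| * Real.exp (-u*t^2))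
      + (|Real.log a| * (4*u^2)) * (t^2 * Real.exp (-u*t^2))) := k2.add j2
  have k4 : Integrable (fun t : ℝ => lam^2/(a^2+lam^2*t^2)
      + (2*lam/a*u) * (|t| * Real.exp (-u*t^2))
      + (|Real.log a| * (4*u^2)) * (t^2 * Real.exp (-u*t^2))
      + (|Real.log a| * (2*u)) * Real.exp (-u*t^2)) := k3.add j3
  have k5 : Integrable (fun t : ℝ => lam^2/(a^2+lam^2*t^2)
      + (2*lam/a*u) * (|t| * Real.exp (-u*t^2))
      + (|Real.log a| * (4*u^2)) * (t^2 * Real.exp (-u*t^2))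
      + (|Real.log a| * (2*u)) * Real.exp (-u*t^2)
      + (lam/a*(4*u^2)) * (|t|^3 * Real.exp (-u*t^2))) := k4.add j4
  have k6 : Integrable (fun t : ℝ => lam^2/(a^2+lam^2*t^2)
      + (2*lam/a*u) * (|t| * Real.exp (-u*t^2))
      + (|Real.log a| * (4*u^2)) * (t^2 * Real.exp (-u*t^2))
      + (|Real.log a| * (2*u)) * Real.exp (-u*t^2)
      + (lam/a*(4*u^2)) * (|t|^3 * Real.exp (-u*t^2))
      + (lam/a*(2*u)) * (|t| * Real.exp (-u*t^2))) := k5.add j5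
  have hIF2 : Integrable (fun t => F2 a lam u t) := by
    refine Integrable.mono' k6
      (cont_F2 ha).aestronglyMeasurable (Eventually.of_forall fun t => ?_)
    rw [Real.norm_eq_abs]
    simpa [g] using F2_bound ha hlam hu t
  -- the integral of the bound
  have hBval : (∫ t : ℝ, (lam^2/(a^2+lam^2*t^2)
        + (2*lam/a*u) * (|t| * Real.exp (-u*t^2))
        + (|Real.log a| * (4*u^2)) * (t^2 * Real.exp (-u*t^2))
        + (|Real.log a| * (2*u)) * Real.exp (-u*t^2)
        + (lam/a*(4*u^2)) * (|t|^3 * Real.exp (-u*t^2))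
        + (lam/a*(2*u)) * (|t| * Real.exp (-u*t^2))))
      = (∫ t : ℝ, lam^2/(a^2+lam^2*t^2)) + (2*lam/a*u) * u⁻¹
        + (|Real.log a| * (4*u^2)) * (u ^ (-(3:ℝ)/2) * (Real.sqrt π / 2))
        + (|Real.log a| * (2*u)) * Real.sqrt (π/u)
        + (lam/a*(4*u^2)) * (u^2)⁻¹
        + (lam/a*(2*u)) * u⁻¹ := by
    rw [integral_add k5 j5, integral_add k4 j4, integral_add k3 j3,
      integral_add k2 j2, integral_add iB1 j1,
      integral_const_mul, integral_const_mul, integral_const_mul, integral_const_mul,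
      integral_const_mul, M1 hu, M2 hu, M3 hu, integral_gaussian]
  -- bounding the value
  have hsu : Real.sqrt u ≤ 1 := Real.sqrt_le_one.mpr hu1.le
  have husq : u^2 * u^(-(3:ℝ)/2) = Real.sqrt u := by
    rw [← Real.rpow_natCast u 2, ← Real.rpow_add hu, Real.sqrt_eq_rpow]
    norm_num
  have T2 : (2*lam/a*u) * u⁻¹ = 2*lam/a := by field_simp
  have T3 : (|Real.log a| * (4*u^2)) * (u ^ (-(3:ℝ)/2) * (Real.sqrt π / 2))
      = 2*Real.sqrt π*|Real.log a| * Real.sqrt u := by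
    calc (|Real.log a| * (4*u^2)) * (u ^ (-(3:ℝ)/2) * (Real.sqrt π / 2))
        = |Real.log a| * (2*Real.sqrt π) * (u^2 * u^(-(3:ℝ)/2)) := by ring
      _ = _ := by rw [husq]; ring
  have T4 : (|Real.log a| * (2*u)) * Real.sqrt (π/u)
      = 2*Real.sqrt π*|Real.log a| * Real.sqrt u := by
    rw [Real.sqrt_div Real.pi_pos.le u]
    calc |Real.log a| * (2*u) * (Real.sqrt π / Real.sqrt u)
        = |Real.log a| * 2 * Real.sqrt π * (u / Real.sqrt u) := by ring
      _ = _ := by rw [Real.div_sqrt]; ring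
  have T5 : (lam/a*(4*u^2)) * (u^2)⁻¹ = 4*lam/a := by field_simp
  have T6 : (lam/a*(2*u)) * u⁻¹ = 2*lam/a := by field_simp
  have hBle : (∫ t : ℝ, (lam^2/(a^2+lam^2*t^2)
        + (2*lam/a*u) * (|t| * Real.exp (-u*t^2))
        + (|Real.log a| * (4*u^2)) * (t^2 * Real.exp (-u*t^2))
        + (|Real.log a| * (2*u)) * Real.exp (-u*t^2)
        + (lam/a*(4*u^2)) * (|t|^3 * Real.exp (-u*t^2))
        + (lam/a*(2*u)) * (|t| * Real.exp (-u*t^2))))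
      ≤ (∫ t : ℝ, lam^2/(a^2 + lam^2*t^2)) + 8*lam/a + 4*Real.sqrt π * |Real.log a| := by
    rw [hBval, T2, T3, T4, T5, T6]
    have h44 : 4*Real.sqrt π*|Real.log a| * Real.sqrt u ≤ 4*Real.sqrt π*|Real.log a| :=
      mul_le_of_le_one_right (by positivity) hsu
    have e : (∫ t : ℝ, lam^2/(a^2+lam^2*t^2)) + 2*lam/a
        + 2*Real.sqrt π * |Real.log a| * Real.sqrt u
        + 2*Real.sqrt π * |Real.log a| * Real.sqrt u + 4*lam/a + 2*lam/a
        = ((∫ t : ℝ, lam^2/(a^2+lam^2*t^2)) + 8*lam/a)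
          + 4*Real.sqrt π * |Real.log a| * Real.sqrt u := by ring
    have e2 : (∫ t : ℝ, lam^2/(a^2 + lam^2*t^2)) + 8*lam/a + 4*Real.sqrt π * |Real.log a|
        = ((∫ t : ℝ, lam^2/(a^2+lam^2*t^2)) + 8*lam/a) + 4*Real.sqrt π * |Real.log a| := by ring
    rw [e, e2]
    exact add_le_add_right (by convert h44 using 2 <;> ring) _
  -- the norm of the second derivative integral
  have hnorm2 : (∫ t : ℝ, ‖deriv (deriv f) t‖)
      ≤ (∫ t : ℝ, lam^2/(a^2 + lam^2*t^2)) + 8*lam/a + 4*Real.sqrt π * |Real.log a| := by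
    refine le_trans ?_ hBle
    have hrw : (∫ t : ℝ, ‖deriv (deriv f) t‖) = ∫ t : ℝ, |F2 a lam u t| := by
      rw [hder2]
      simp [Complex.norm_real, Real.norm_eq_abs]
    rw [hrw]
    exact integral_mono hIF2.abs k6 (fun t => by simpa [g] using F2_bound ha hlam hu t)
  -- identify the integral with the Fourier transform
  have heq : (∫ t : ℝ, (Real.log ‖(a : ℂ) + Complex.I * lam * t‖ : ℂ)
        * Complex.exp (-u * t ^ 2 + Complex.I * t * ((u - v : ℝ) : ℂ))) = 𝓕 f ξ := by
    rw [Real.fourier_eq']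
    congr 1
    funext t
    rw [kernel_eq a lam u (u-v) t (by positivity)]
    simp only [RCLike.inner_apply, conj_trivial, hξ_def]
    rw [mul_comm t]
  -- conclude
  have hfb := fourier_bound (f := f) (hIF0.ofReal) hdiff0
    (by rw [hder1]; exact hIF1.ofReal) hdiff1 (by rw [hder2]; exact hIF2.ofReal) ξ
  have hξsq : (2*π*ξ)^2 = (u - v)^2 := by
    rw [hξ_def]
    field_simp
  rw [hξsq] at hfb
  have hgoal : ‖∫ t : ℝ, (Real.log ‖(a : ℂ) + Complex.I * lam * t‖ : ℂ)
        * Complex.exp (-u * t ^ 2 + Complex.I * t * ((u:ℂ) - (v:ℂ)))‖ * (u - v)^2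
      ≤ (∫ t : ℝ, lam^2/(a^2 + lam^2*t^2)) + 8*lam/a + 4*Real.sqrt π * |Real.log a| := by
    have hc : ((u:ℂ) - (v:ℂ)) = ((u - v : ℝ) : ℂ) := by push_cast; ring
    simp only [hc]
    rw [heq]
    calc ‖𝓕 f ξ‖ * (u - v)^2 = (u - v)^2 * ‖𝓕 f ξ‖ := by ring
      _ ≤ ∫ t : ℝ, ‖deriv (deriv f) t‖ := hfb
      _ ≤ _ := hnorm2
  rw [le_div_iff₀ (by positivity : (0:ℝ) < (u - v)^2)]
  exact hgoal
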